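/- Let X = ℤ and let H = H^e ∪ H^o be the class from the block construction (H^e uses blocks A_d together with negative evens, H^o uses blocks A_d together with negative odds). Then the Littlestone dimension of H equals 2. In particular H is online learnable but, since C(H) = ∞, not uniformly generatable. -/
import Mathlib


open Set

variable {X : Type*}

/-- The set of distinct examples seen in the first `t` steps of the stream `x`. -/
def seenSet (x : ℕ → X) (t : ℕ) : Set X := x '' {i | i < t}

/-- The finite prefix `x₁, ..., x_t` of the stream, as a list. -/
def prefList (x : ℕ → X) (t : ℕ) : List X := List.ofFn (fun i : Fin t => x i)

/-- The version space of `H` induced by the positive examples `S`. -/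
def versionSpace (H : Set (Set X)) (S : Set X) : Set (Set X) := {h | h ∈ H ∧ S ⊆ h}

/-- The closure `⟨S⟩_H`: common positive examples of all consistent hypotheses. -/
def hclosure (H : Set (Set X)) (S : Set X) : Set X := ⋂₀ versionSpace H S

/-- There exist `d` distinct examples with nonempty version space and finite closure. -/
def FinClosureWitness (H : Set (Set X)) (d : ℕ) : Prop :=
  ∃ S : Finset X, S.card = d ∧ (versionSpace H ↑S).Nonempty ∧ (hclosure H ↑S).Finite

/-- The Closure dimension of `H` is infinite. -/
def ClosureDimInf (H : Set (Set X)) : Prop := ∀ n : ℕ, ∃ d, n ≤ d ∧ FinClosureWitness H d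

/-- The Closure dimension of `H` is at most `d`. -/
def ClosureDimLE (H : Set (Set X)) (d : ℕ) : Prop := ∀ d', d < d' → ¬ FinClosureWitness H d'

/-- Uniformly Unbounded Support property. -/
def UUS (H : Set (Set X)) : Prop := ∀ h ∈ H, h.Infinite

/-- The generator `G` outputs an unseen positive example of `h` at step `s`. -/
def GenOK (G : List X → X) (h : Set X) (x : ℕ → X) (s : ℕ) : Prop :=
  G (prefList x s) ∈ h \ seenSet x s

def UniformlyGeneratable (H : Set (Set X)) : Prop :=
  ∃ G : List X → X, ∃ d : ℕ, ∀ h ∈ H, ∀ x : ℕ → X, (∀ i, x i ∈ h) →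
    ∀ t, (seenSet x t).ncard = d → ∀ s, t ≤ s → GenOK G h x s

def NonUniformlyGeneratable (H : Set (Set X)) : Prop :=
  ∃ G : List X → X, ∀ h ∈ H, ∃ d : ℕ, ∀ x : ℕ → X, (∀ i, x i ∈ h) →
    ∀ t, (seenSet x t).ncard = d → ∀ s, t ≤ s → GenOK G h x s

/-- `x` is an enumeration of the support `h`. -/
def IsEnum (h : Set X) (x : ℕ → X) : Prop := (∀ i, x i ∈ h) ∧ ∀ y ∈ h, ∃ i, x i = y

def GeneratableInLimit (H : Set (Set X)) : Prop :=
  ∃ G : List X → X, ∀ h ∈ H, ∀ x : ℕ → X, IsEnum h x →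
    ∃ t, ∀ s, t ≤ s → GenOK G h x s

/-- The block `A_d = {d(d-1)/2 + 1, ..., d(d-1)/2 + d}` as a subset of `ℤ`. -/
def Ablock (d : ℕ) : Set ℤ :=
  {x : ℤ | (d : ℤ) * ((d : ℤ) - 1) / 2 + 1 ≤ x ∧ x ≤ (d : ℤ) * ((d : ℤ) - 1) / 2 + (d : ℤ)}

/-- The negative even integers. -/
def Eneg : Set ℤ := {x : ℤ | x < 0 ∧ Even x}

/-- The negative odd integers. -/
def Oneg : Set ℤ := {x : ℤ | x < 0 ∧ Odd x}

/-- `H^e = {x ↦ 1[x ∈ A_d ∪ E] : d ∈ ℕ}`. -/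
def He : Set (Set ℤ) := {h | ∃ d : ℕ, 1 ≤ d ∧ h = Ablock d ∪ Eneg}

/-- `H^o = {x ↦ 1[x ∈ A_d ∪ O] : d ∈ ℕ}`. -/
def Ho : Set (Set ℤ) := {h | ∃ d : ℕ, 1 ≤ d ∧ h = Ablock d ∪ Oneg}

/-- `H = H^e ∪ H^o`. -/
def Hblocks : Set (Set ℤ) := He ∪ Ho

/-- `H` shatters the finite set `S` (VC-style shattering). -/
def Shatters {X : Type*} (H : Set (Set X)) (S : Finset X) : Prop :=
  ∀ T ⊆ S, ∃ h ∈ H, ∀ x ∈ S, (x ∈ h ↔ x ∈ T)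

/-- There is a Littlestone tree of depth `d` shattered by `H`: nodes are labeled
by examples (indexed by the path of bits leading to them), and every
root-to-leaf path is realized by some hypothesis in `H`. -/
def LShattered {X : Type*} (H : Set (Set X)) (d : ℕ) : Prop :=
  ∃ t : List Bool → X, ∀ σ : ℕ → Bool, ∃ h ∈ H, ∀ i : ℕ, i < d →
    ((t (List.ofFn fun j : Fin i => σ j)) ∈ h ↔ σ i = true)

/-! ### Auxiliary machinery -/

/-- Start of the `d`-th block. -/
def gblk (d : ℕ) : ℤ := (d : ℤ) * ((d : ℤ) - 1) / 2

lemma mem_Ablock {z : ℤ} {d : ℕ} : z ∈ Ablock d ↔ gblk d + 1 ≤ z ∧ z ≤ gblk d + d :=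
  Iff.rfl

lemma gblk_succ (d : ℕ) : gblk (d + 1) = gblk d + d := by
  obtain ⟨k, hk⟩ : Even ((d : ℤ) * ((d : ℤ) - 1)) := by
    have := Int.even_mul_succ_self ((d : ℤ) - 1)
    have h : ((d : ℤ) - 1) * ((d : ℤ) - 1 + 1) = (d : ℤ) * ((d : ℤ) - 1) := by ring
    rwa [h] at this
  have h1 : ((d : ℤ) + 1) * (((d : ℤ) + 1) - 1) = (d : ℤ) * ((d : ℤ) - 1) + 2 * d := by ring
  simp only [gblk]
  push_cast
  rw [h1, hk]
  omega

lemma gblk_nonneg (d : ℕ) : 0 ≤ gblk d := by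
  induction d with
  | zero => simp [gblk]
  | succ n ih => rw [gblk_succ]; positivity

lemma gblk_add_le {d d' : ℕ} (h : d < d') : gblk d + d ≤ gblk d' := by
  induction d' with
  | zero => omega
  | succ n ih =>
    rw [gblk_succ]
    rcases Nat.lt_succ_iff_lt_or_eq.mp h with h' | h'
    · have := ih h'
      have : (d : ℤ) ≤ n := by exact_mod_cast Nat.le_of_lt h'
      omega
    · subst h'; omega

lemma Ablock_pos {z : ℤ} {d : ℕ} (h : z ∈ Ablock d) : 1 ≤ z := by
  have := gblk_nonneg d
  rw [mem_Ablock] at h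
  omega

lemma Ablock_unique {z : ℤ} {d d' : ℕ} (h : z ∈ Ablock d) (h' : z ∈ Ablock d') : d = d' := by
  rw [mem_Ablock] at h h'
  rcases lt_trichotomy d d' with hlt | heq | hlt
  · have := gblk_add_le hlt; omega
  · exact heq
  · have := gblk_add_le hlt; omega

/-- Parity-indexed family of negative sets. -/
def Pb (b : Bool) : Set ℤ := if b then Eneg else Oneg

lemma mem_Pb {b : Bool} {z : ℤ} : z ∈ Pb b ↔ z < 0 ∧ z % 2 = (if b then 0 else 1) := by
  cases b <;> simp [Pb, Eneg, Oneg, Int.even_iff, Int.odd_iff]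

lemma mem_Hblocks {h : Set ℤ} :
    h ∈ Hblocks ↔ ∃ d : ℕ, ∃ b : Bool, 1 ≤ d ∧ h = Ablock d ∪ Pb b := by
  constructor
  · rintro (⟨d, hd, rfl⟩ | ⟨d, hd, rfl⟩)
    · exact ⟨d, true, hd, rfl⟩
    · exact ⟨d, false, hd, rfl⟩
  · rintro ⟨d, b, hd, rfl⟩
    cases b
    · exact Or.inr ⟨d, hd, rfl⟩
    · exact Or.inl ⟨d, hd, rfl⟩

lemma Pb_eq_of_mem {b b' : Bool} {z : ℤ} (h : z ∈ Pb b) (h' : z ∈ Pb b') : b = b' := by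
  rw [mem_Pb] at h h'
  cases b <;> cases b' <;> simp_all

/-- The key uniqueness lemma: if some hypothesis contains `u` but not `v`,
then at most one hypothesis contains both `u` and `v`. -/
lemma keyUnique {u v : ℤ}
    (h2 : ∃ h₂ ∈ Hblocks, u ∈ h₂ ∧ v ∉ h₂)
    {h h' : Set ℤ} (hH : h ∈ Hblocks) (hH' : h' ∈ Hblocks)
    (hu : u ∈ h) (hv : v ∈ h) (hu' : u ∈ h') (hv' : v ∈ h') : h = h' := by
  obtain ⟨h₂, hH₂, hu₂, hv₂⟩ := h2
  rw [mem_Hblocks] at hH hH' hH₂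
  obtain ⟨d, b, hd1, rfl⟩ := hH
  obtain ⟨d', b', hd1', rfl⟩ := hH'
  obtain ⟨d₂, b₂, hd12, rfl⟩ := hH₂
  rcases hu with hu | hu
  · -- u is in a block, hence positive
    have hu1 : 1 ≤ u := Ablock_pos hu
    have hu'b : u ∈ Ablock d' := by
      rcases hu' with h' | h'
      · exact h'
      · rw [mem_Pb] at h'; omega
    have hu2b : u ∈ Ablock d₂ := by
      rcases hu₂ with h' | h'
      · exact h'
      · rw [mem_Pb] at h'; omega
    have hdd' : d = d' := Ablock_unique hu hu'b
    have hdd2 : d = d₂ := Ablock_unique hu hu2b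
    rcases hv with hv | hv
    · exact absurd (Or.inl (hdd2 ▸ hv)) hv₂
    · have hvneg : v < 0 := (mem_Pb.mp hv).1
      have hv'p : v ∈ Pb b' := by
        rcases hv' with h' | h'
        · have := Ablock_pos h'; omega
        · exact h'
      have hbb' : b = b' := Pb_eq_of_mem hv hv'p
      rw [hdd', hbb']
  · -- u is negative
    have huneg : u < 0 := (mem_Pb.mp hu).1
    have hu'p : u ∈ Pb b' := by
      rcases hu' with h' | h'
      · have := Ablock_pos h'; omega
      · exact h'
    have hu2p : u ∈ Pb b₂ := by
      rcases hu₂ with h' | h'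
      · have := Ablock_pos h'; omega
      · exact h'
    have hbb' : b = b' := Pb_eq_of_mem hu hu'p
    have hbb2 : b = b₂ := Pb_eq_of_mem hu hu2p
    rcases hv with hv | hv
    · have hv1 : 1 ≤ v := Ablock_pos hv
      have hv'b : v ∈ Ablock d' := by
        rcases hv' with h' | h'
        · exact h'
        · rw [mem_Pb] at h'; omega
      rw [Ablock_unique hv hv'b, hbb']
    · exact absurd (Or.inr (hbb2 ▸ hv)) hv₂

lemma He_mem_Hblocks {d : ℕ} (hd : 1 ≤ d) : Ablock d ∪ Eneg ∈ Hblocks :=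
  Or.inl ⟨d, hd, rfl⟩

lemma Ho_mem_Hblocks {d : ℕ} (hd : 1 ≤ d) : Ablock d ∪ Oneg ∈ Hblocks :=
  Or.inr ⟨d, hd, rfl⟩

lemma Ablock_one : (1 : ℤ) ∈ Ablock 1 := by
  rw [mem_Ablock]
  norm_num [gblk]

lemma one_not_Ablock_two : (1 : ℤ) ∉ Ablock 2 := by
  rw [mem_Ablock]
  norm_num [gblk]

lemma neg_two_Eneg : (-2 : ℤ) ∈ Eneg := by
  constructor
  · norm_num
  · exact ⟨-1, by norm_num⟩

lemma neg_two_not_Oneg : (-2 : ℤ) ∉ Oneg := by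
  rintro ⟨-, k, hk⟩
  omega

lemma one_not_Eneg : (1 : ℤ) ∉ Eneg := fun h => by have := h.1; omega

lemma one_not_Oneg : (1 : ℤ) ∉ Oneg := fun h => by have := h.1; omega

lemma neg_two_not_Ablock {d : ℕ} : (-2 : ℤ) ∉ Ablock d := fun h => by
  have := Ablock_pos h; omega

/-- Part 1: a depth 2 Littlestone tree is shattered. -/
lemma lshattered_two : LShattered Hblocks 2 := by
  refine ⟨fun l => if l = [] then (-2 : ℤ) else 1, fun σ => ?_⟩
  have hofn0 : (List.ofFn fun j : Fin 0 => σ j) = [] := by simp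
  have hofn1 : (List.ofFn fun j : Fin 1 => σ j) = [σ 0] := by simp
  rcases hσ0 : σ 0 <;> rcases hσ1 : σ 1
  · refine ⟨Ablock 2 ∪ Oneg, Ho_mem_Hblocks (by norm_num), fun i hi => ?_⟩
    interval_cases i <;>
      simp [hofn0, hofn1, hσ0, hσ1, neg_two_not_Oneg, neg_two_not_Ablock,
        one_not_Ablock_two, one_not_Oneg]
  · refine ⟨Ablock 1 ∪ Oneg, Ho_mem_Hblocks (by norm_num), fun i hi => ?_⟩
    interval_cases i <;>
      simp [hofn0, hofn1, hσ0, hσ1, neg_two_not_Oneg, neg_two_not_Ablock, Ablock_one]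
  · refine ⟨Ablock 2 ∪ Eneg, He_mem_Hblocks (by norm_num), fun i hi => ?_⟩
    interval_cases i <;>
      simp [hofn0, hofn1, hσ0, hσ1, neg_two_Eneg, one_not_Ablock_two, one_not_Eneg]
  · refine ⟨Ablock 1 ∪ Eneg, He_mem_Hblocks (by norm_num), fun i hi => ?_⟩
    interval_cases i <;>
      simp [hofn0, hofn1, hσ0, hσ1, neg_two_Eneg, Ablock_one]

/-- Part 2: no depth 3 Littlestone tree is shattered. -/
lemma not_lshattered_three : ¬ LShattered Hblocks 3 := by
  rintro ⟨t, ht⟩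
  obtain ⟨h₂, hH₂, hp₂⟩ := ht (fun n => decide (n = 0))
  obtain ⟨h₃, hH₃, hp₃⟩ := ht (fun _ => true)
  obtain ⟨h₄, hH₄, hp₄⟩ := ht (fun n => decide (n < 2))
  have e0 : (List.ofFn fun j : Fin 0 => true) = ([] : List Bool) := by simp
  have hu₂ : t [] ∈ h₂ := by have := hp₂ 0 (by norm_num); simpa using this
  have hv₂ : t [true] ∉ h₂ := by
    have := hp₂ 1 (by norm_num); simpa using this
  have hu₃ : t [] ∈ h₃ := by have := hp₃ 0 (by norm_num); simpa using this
  have hv₃ : t [true] ∈ h₃ := by have := hp₃ 1 (by norm_num); simpa using this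
  have hw₃ : t [true, true] ∈ h₃ := by have := hp₃ 2 (by norm_num); simpa using this
  have hu₄ : t [] ∈ h₄ := by have := hp₄ 0 (by norm_num); simpa using this
  have hv₄ : t [true] ∈ h₄ := by have := hp₄ 1 (by norm_num); simpa using this
  have hw₄ : t [true, true] ∉ h₄ := by have := hp₄ 2 (by norm_num); simpa using this
  have := keyUnique ⟨h₂, hH₂, hu₂, hv₂⟩ hH₃ hH₄ hu₃ hv₃ hu₄ hv₄
  exact hw₄ (this ▸ hw₃)

lemma Ablock_eq_Icc (d : ℕ) : Ablock d = Set.Icc (gblk d + 1) (gblk d + d) := by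
  ext z; exact mem_Ablock

lemma coe_Icc_eq_Ablock (d : ℕ) :
    (↑(Finset.Icc (gblk d + 1) (gblk d + d)) : Set ℤ) = Ablock d := by
  rw [Finset.coe_Icc, Ablock_eq_Icc]

/-- Part 3: the closure dimension is infinite. -/
lemma closureDimInf_Hblocks : ClosureDimInf Hblocks := by
  intro n
  refine ⟨max n 1, le_max_left _ _, ?_⟩
  set D := max n 1 with hD
  have hD1 : 1 ≤ D := le_max_right _ _
  refine ⟨Finset.Icc (gblk D + 1) (gblk D + D), ?_, ?_, ?_⟩
  · rw [Int.card_Icc]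
    omega
  · refine ⟨Ablock D ∪ Eneg, He_mem_Hblocks hD1, ?_⟩
    rw [coe_Icc_eq_Ablock]
    exact Set.subset_union_left
  · have h1 : Ablock D ∪ Eneg ∈ versionSpace Hblocks ↑(Finset.Icc (gblk D + 1) (gblk D + D)) := by
      refine ⟨He_mem_Hblocks hD1, ?_⟩
      rw [coe_Icc_eq_Ablock]; exact Set.subset_union_left
    have h2 : Ablock D ∪ Oneg ∈ versionSpace Hblocks ↑(Finset.Icc (gblk D + 1) (gblk D + D)) := by
      refine ⟨Ho_mem_Hblocks hD1, ?_⟩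
      rw [coe_Icc_eq_Ablock]; exact Set.subset_union_left
    have hsub : hclosure Hblocks ↑(Finset.Icc (gblk D + 1) (gblk D + D)) ⊆ Ablock D := by
      intro z hz
      have hz1 := hz _ h1
      have hz2 := hz _ h2
      rcases hz1 with hz1 | hz1
      · exact hz1
      · rcases hz2 with hz2 | hz2
        · exact hz2
        · exact absurd hz2.2 (Int.not_odd_iff_even.mpr hz1.2)
    exact Set.Finite.subset (by rw [Ablock_eq_Icc]; exact Set.finite_Icc _ _) hsub

/-- Part 4: not uniformly generatable. -/
lemma not_uniformlyGeneratable_Hblocks : ¬ UniformlyGeneratable Hblocks := by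
  rintro ⟨G, d, hG⟩
  set D := max d 1 with hDdef
  have hD1 : 1 ≤ D := le_max_right _ _
  have hdD : d ≤ D := le_max_left _ _
  set x : ℕ → ℤ := fun i => gblk D + 1 + ((i % D : ℕ) : ℤ) with hxdef
  have hx : ∀ i, x i ∈ Ablock D := by
    intro i
    rw [mem_Ablock, hxdef]
    simp only
    have h1 : i % D < D := Nat.mod_lt _ (by omega)
    have h2 : ((i % D : ℕ) : ℤ) < (D : ℤ) := by exact_mod_cast h1
    have h3 : (0 : ℤ) ≤ ((i % D : ℕ) : ℤ) := Int.natCast_nonneg _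
    omega
  have hseen_d : (seenSet x d).ncard = d := by
    have himg : seenSet x d = (fun i : ℕ => gblk D + 1 + (i : ℤ)) '' {i | i < d} := by
      unfold seenSet
      apply Set.image_congr
      intro i hi
      simp only [Set.mem_setOf_eq] at hi
      rw [hxdef]
      simp only
      rw [Nat.mod_eq_of_lt (lt_of_lt_of_le hi hdD)]
    rw [himg]
    rw [Set.ncard_image_of_injective _ (by intro a b hab; simpa using hab)]
    have : {i : ℕ | i < d} = ↑(Finset.range d) := by ext i; simp
    rw [this, Set.ncard_coe_finset, Finset.card_range]
  have hseenD : seenSet x D = Ablock D := by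
    ext z
    constructor
    · rintro ⟨i, hi, rfl⟩
      exact hx i
    · intro hz
      rw [mem_Ablock] at hz
      refine ⟨(z - gblk D - 1).toNat, ?_, ?_⟩
      · simp only [Set.mem_setOf_eq]
        omega
      · rw [hxdef]
        simp only
        rw [Nat.mod_eq_of_lt (by omega)]
        omega
  have hGen1 := hG (Ablock D ∪ Eneg) (He_mem_Hblocks hD1) x (fun i => Or.inl (hx i)) d
    hseen_d D hdD
  have hGen2 := hG (Ablock D ∪ Oneg) (Ho_mem_Hblocks hD1) x (fun i => Or.inl (hx i)) d
    hseen_d D hdD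
  unfold GenOK at hGen1 hGen2
  rw [hseenD] at hGen1 hGen2
  obtain ⟨hz1, hz1'⟩ := hGen1
  obtain ⟨hz2, -⟩ := hGen2
  rcases hz1 with hz1 | hz1
  · exact hz1' hz1
  · rcases hz2 with hz2 | hz2
    · exact hz1' hz2
    · exact (Int.not_odd_iff_even.mpr hz1.2) hz2.2

/-- the Littlestone dimension of `Hblocks` equals 2 (a depth-2
Littlestone tree is shattered but no depth-3 tree is), so it is online
learnable; yet its Closure dimension is infinite, so it is not uniformly
generatable. -/
theorem stmt17 :
    LShattered Hblocks 2 ∧ ¬ LShattered Hblocks 3 ∧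
    ClosureDimInf Hblocks ∧ ¬ UniformlyGeneratable Hblocks :=
  ⟨lshattered_two, not_lshattered_three, closureDimInf_Hblocks,
    not_uniformlyGeneratable_Hblocks⟩
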